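/- Let λ be an n-partition, π an n-permutation, and T a semistandard tableau of shape λ. The following three conditions are equivalent: (i) S(T) ≤ Y_λ(π) (entrywise); (ii) T(l,k) ∈ A_λ(T,π;l,k) for every box (l,k) of λ; (iii) T(l,k) ∈ B_λ(T,π;l,k) for every box (l,k) of λ. In particular, the eastern condition (ii) and the southwestern condition (iii) are equivalent to each other. -/

import Mathlib

/-
Common combinatorial set-up for "Tableaux for Key Polynomials, Demazure
Characters, and Atoms" (Proctor–Willis).

Conventions: a box `(j, i)` means column `j`, row `i`, both 1-indexed.
Partial (remnant) tableaux are encoded by their column-length functions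
`c : ℕ → ℕ` (each column of a remnant is a top segment of the original
column), together with the ambient value function `T : ℕ → ℕ → ℕ`.
-/

open scoped BigOperators Classical

noncomputable section

namespace KeyPoly

open MvPolynomial

/-- An `n`-partition `λ = (λ_1, …, λ_n)` with `λ_1 ≥ … ≥ λ_n ≥ 0`,
recorded as a function on `1, …, n`, vanishing beyond `n`. -/
structure NPartition (n : ℕ) where
  part : ℕ → ℕ
  antitone : ∀ ⦃i j : ℕ⦄, 1 ≤ i → i ≤ j → part j ≤ part i
  outside : ∀ i : ℕ, n < i → part i = 0

variable {n : ℕ}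

/-- The column length `ζ_j` of the Young diagram of `λ`. -/
def zeta (lam : NPartition n) (j : ℕ) : ℕ :=
  ((Finset.Icc 1 n).filter fun i => j ≤ lam.part i).card

/-- The box `(j,i)` (column `j`, row `i`) belongs to the diagram of `λ`. -/
def InShape (lam : NPartition n) (j i : ℕ) : Prop :=
  1 ≤ j ∧ 1 ≤ i ∧ i ≤ n ∧ j ≤ lam.part i

/-- The boxes of the diagram of `λ`, as a finite set of pairs (column, row). -/
def boxes (lam : NPartition n) : Finset (ℕ × ℕ) :=
  (Finset.Icc 1 (lam.part 1) ×ˢ Finset.Icc 1 n).filter fun b => b.1 ≤ lam.part b.2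

/-- `T` is a semistandard tableau of shape `λ` with values in `[1,n]`:
rows weakly increase eastward, columns strictly increase southward. -/
def IsSSYT (lam : NPartition n) (T : ℕ → ℕ → ℕ) : Prop :=
  (∀ j i, InShape lam j i → 1 ≤ T j i ∧ T j i ≤ n) ∧
  (∀ j i, InShape lam (j + 1) i → T j i ≤ T (j + 1) i) ∧
  (∀ j i, InShape lam j (i + 1) → T j i < T j (i + 1))

/-- Normalization: the filling vanishes outside the shape. -/
def ZeroOutside (lam : NPartition n) (T : ℕ → ℕ → ℕ) : Prop :=
  ∀ j i, ¬ InShape lam j i → T j i = 0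

/-- `T(l, k+1)`, with the boundary convention `n+1` when `k = ζ_l`. -/
def south (lam : NPartition n) (T : ℕ → ℕ → ℕ) (l k : ℕ) : ℕ :=
  if InShape lam l (k + 1) then T l (k + 1) else n + 1

/-- `T(l+1, k)`, with the boundary convention `n` when `l = λ_k`. -/
def east (lam : NPartition n) (T : ℕ → ℕ → ℕ) (l k : ℕ) : ℕ :=
  if InShape lam (l + 1) k then T (l + 1) k else n

/-- An `n`-permutation: a tuple `(p 1, …, p n)` of distinct entries from `[1,n]`. -/
def IsNPerm (n : ℕ) (p : ℕ → ℕ) : Prop :=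
  Set.BijOn p (Set.Icc 1 n) (Set.Icc 1 n)

/-- The `λ`-key `Y_λ(π)`: column `j` is `π_1, …, π_{ζ_j}` sorted increasingly
(from top to bottom); zero outside the shape. -/
def keyTab (lam : NPartition n) (p : ℕ → ℕ) (j i : ℕ) : ℕ :=
  if InShape lam j i then
    (((Finset.Icc 1 (zeta lam j)).image p).sort (· ≤ ·)).getD (i - 1) 0
  else 0

/-- A semistandard `T` is a key if the values of each column contain the
values of every column to its east. -/
def colSet (lam : NPartition n) (T : ℕ → ℕ → ℕ) (j : ℕ) : Finset ℕ :=
  (Finset.Icc 1 (zeta lam j)).image (T j)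

def IsKey (lam : NPartition n) (T : ℕ → ℕ → ℕ) : Prop :=
  ∀ j j' : ℕ, 1 ≤ j → j ≤ j' → j' ≤ lam.part 1 → colSet lam T j' ⊆ colSet lam T j

/-! ### The (right) scanning method -/

/-- The next column of the scanning path: the earliest column `h' > h`
(up to `maxCol`) whose column bottom in the remnant `c` is nonempty and has
value weakly larger than the bottom value of column `h`. -/
def nextCol (T : ℕ → ℕ → ℕ) (c : ℕ → ℕ) (maxCol h : ℕ) : Option ℕ :=
  (List.range' (h + 1) (maxCol - h)).find?
    (fun h' => decide (0 < c h' ∧ T h (c h) ≤ T h' (c h')))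

/-- Columns of the scanning path (EWIS of column bottoms) starting at column `h`,
with explicit fuel. -/
def pathColsAux (T : ℕ → ℕ → ℕ) (c : ℕ → ℕ) (maxCol : ℕ) : ℕ → ℕ → List ℕ
  | 0, h => [h]
  | fuel + 1, h =>
    match nextCol T c maxCol h with
    | none => [h]
    | some h' => h :: pathColsAux T c maxCol fuel h'

/-- Columns of the scanning path starting at the bottom of column `j` of the
remnant with column lengths `c`. -/
def pathCols (T : ℕ → ℕ → ℕ) (c : ℕ → ℕ) (maxCol j : ℕ) : List ℕ :=
  pathColsAux T c maxCol maxCol j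

/-- Remove the scanning path starting in column `j` from the remnant `c`. -/
def removePath (T : ℕ → ℕ → ℕ) (c : ℕ → ℕ) (maxCol j : ℕ) : ℕ → ℕ :=
  fun h => if h ∈ pathCols T c maxCol j then c h - 1 else c h

/-- Iterate path removal `r` times, always starting from column `j`. -/
def remnantIter (T : ℕ → ℕ → ℕ) (c0 : ℕ → ℕ) (maxCol j : ℕ) : ℕ → ℕ → ℕ
  | 0 => c0
  | r + 1 => removePath T (remnantIter T c0 maxCol j r) maxCol j

/-- Column lengths of the remnant tableau `T^{(j;i)}`. -/
def remnant (lam : NPartition n) (T : ℕ → ℕ → ℕ) (j i : ℕ) : ℕ → ℕ :=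
  remnantIter T (zeta lam) (lam.part 1) j (zeta lam j - i)

/-- The scanning path `P(T; j, i)`, recorded by its list of columns. -/
def scanPath (lam : NPartition n) (T : ℕ → ℕ → ℕ) (j i : ℕ) : List ℕ :=
  pathCols T (remnant lam T j i) (lam.part 1) j

/-- The scanning value `S(T; j, i)`: the last value of the EWIS from `(j,i)`. -/
def scanValue (lam : NPartition n) (T : ℕ → ℕ → ℕ) (j i : ℕ) : ℕ :=
  T ((scanPath lam T j i).getLastD j)
    (remnant lam T j i ((scanPath lam T j i).getLastD j))

/-- The box `(l,k)` lies on the scanning path `P(T; j, i)`. -/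
def InScanPath (lam : NPartition n) (T : ℕ → ℕ → ℕ) (j i l k : ℕ) : Prop :=
  l ∈ scanPath lam T j i ∧ k = remnant lam T j i l

/-- `m(U)` where `U` is the remnant with column lengths `c` restricted to the
columns `l+1, …, maxCol`:  the maximum of the column-bottom values, with the
convention `m((())) = 1` for the empty tableau. -/
def mEast (T : ℕ → ℕ → ℕ) (c : ℕ → ℕ) (maxCol l : ℕ) : ℕ :=
  max 1 (((Finset.Icc (l + 1) maxCol).filter fun h => 0 < c h).sup fun h => T h (c h))

/-! ### The condition sets A, C, and B -/

/-- The set `A_λ(T, π; l, k)`. -/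
def Aset (lam : NPartition n) (T : ℕ → ℕ → ℕ) (p : ℕ → ℕ) (l k : ℕ) : Set ℕ :=
  if keyTab lam p l k < mEast T (remnant lam T l k) (lam.part 1) l then (∅ : Set ℕ)
  else Set.Icc k (min (keyTab lam p l k) (min (south lam T l k - 1) (east lam T l k)))

/-- The set `C_λ(T, π; l, k)`. -/
def Cset (lam : NPartition n) (T : ℕ → ℕ → ℕ) (p : ℕ → ℕ) (l k : ℕ) : Set ℕ :=
  if l = lam.part 1 then {keyTab lam p l k}
  else if keyTab lam p l k < mEast T (remnant lam T l k) (lam.part 1) l then (∅ : Set ℕ)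
  else if mEast T (remnant lam T l k) (lam.part 1) l = keyTab lam p l k then
    Set.Icc k (min (keyTab lam p l k) (min (south lam T l k - 1) (east lam T l k)))
  else {keyTab lam p l k} ∩ Set.Icc k (min (south lam T l k - 1) (east lam T l k))

/-- The row index `a(l,k;j)`:  the `i` with `(l-1,k) ∈ P(T;j,i)`
(convention `a(l,k;l) = k`). -/
def aIdx (lam : NPartition n) (T : ℕ → ℕ → ℕ) (l k j : ℕ) : ℕ :=
  if j = l then k
  else ((Finset.Icc 1 (zeta lam j)).filter fun i => InScanPath lam T j i (l - 1) k).sup id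

/-- The row index `b(l,k;j)`:  the `i` with `(l,k+1) ∈ P(T;j,i)` when `k < ζ_l`,
and `ζ_j + 1` when `k = ζ_l` (convention `b(l,k;l) = k+1`). -/
def bIdx (lam : NPartition n) (T : ℕ → ℕ → ℕ) (l k j : ℕ) : ℕ :=
  if j = l then k + 1
  else if k = zeta lam l then zeta lam j + 1
  else ((Finset.Icc 1 (zeta lam j)).filter fun i => InScanPath lam T j i l (k + 1)).sup id

/-- `E(l,k;j,i)`:  the value of `T` at the box `(h,m)` of `P(T;j,i)` with `h < l`
maximal (convention `E(l,k;l,k) = k`). -/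
def Epath (lam : NPartition n) (T : ℕ → ℕ → ℕ) (l k j i : ℕ) : ℕ :=
  if j = l then k
  else
    T (((scanPath lam T j i).filter fun h => decide (h < l)).foldr max 0)
      (remnant lam T j i (((scanPath lam T j i).filter fun h => decide (h < l)).foldr max 0))

/-- The set `B_λ(T, π; l, k) = ⋂_{j=1}^{l} ⋃_{i=a(j)}^{b(j)-1} [E(l,k;j,i), Y_λ(π)(j,i)]`. -/
def Bset (lam : NPartition n) (T : ℕ → ℕ → ℕ) (p : ℕ → ℕ) (l k : ℕ) : Set ℕ :=
  {v | ∀ j, 1 ≤ j → j ≤ l →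
    ∃ i, aIdx lam T l k j ≤ i ∧ i + 1 ≤ bIdx lam T l k j ∧
      Epath lam T l k j i ≤ v ∧ v ≤ keyTab lam p j i}

/-! ### The left scanning method -/

/-- The largest row `r ≤ c j` of column `j` whose value is at most `x`. -/
def maxRow (T : ℕ → ℕ → ℕ) (c : ℕ → ℕ) (j x : ℕ) : ℕ :=
  ((Finset.Icc 1 (c j)).filter fun r => T j r ≤ x).sup id

/-- The rows of the maximizing weakly decreasing sequence through columns
`j, j-1, …, 1` with initial bound `x`, in a remnant with column lengths `c`. -/
def leftRows (T : ℕ → ℕ → ℕ) (c : ℕ → ℕ) : ℕ → ℕ → List ℕ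
  | 0, _ => []
  | j + 1, x => maxRow T c (j + 1) x :: leftRows T c j (T (j + 1) (maxRow T c (j + 1) x))

/-- The column-1 value at the end of the left scanning path originating at `(j, r)`. -/
def leftEndVal (T : ℕ → ℕ → ℕ) (c : ℕ → ℕ) (j r : ℕ) : ℕ :=
  T 1 ((leftRows T c j (T j r)).getLastD 0)

/-- Remove the left scanning path originating at `(l, c l)`, together with
all values beneath it, from the remnant `c`. -/
def leftRemovePath (T : ℕ → ℕ → ℕ) (c : ℕ → ℕ) (l : ℕ) : ℕ → ℕ :=
  fun j =>
    if 1 ≤ j ∧ j ≤ l then (leftRows T c l (T l (c l))).getD (l - j) 0 - 1 else c j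

/-- Iterate left-path removal `r` times (always for column `l`). -/
def leftRemnantIter (T : ℕ → ℕ → ℕ) (c0 : ℕ → ℕ) (l : ℕ) : ℕ → ℕ → ℕ
  | 0 => c0
  | r + 1 => leftRemovePath T (leftRemnantIter T c0 l r) l

/-- Column lengths of the left remnant used to compute `M(T; l, i)`:
`T` restricted to its first `l` columns with the left scanning paths
originating at `(l, ζ_l), …, (l, i+1)` (and everything beneath them) removed. -/
def leftRemnant (lam : NPartition n) (T : ℕ → ℕ → ℕ) (l i : ℕ) : ℕ → ℕ :=
  leftRemnantIter T (zeta lam) l (zeta lam l - i)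

/-- The left scanning value `M(T; l, i)`. -/
def leftScanValue (lam : NPartition n) (T : ℕ → ℕ → ℕ) (l i : ℕ) : ℕ :=
  leftEndVal T (leftRemnant lam T l i) l i

/-! ### The condition sets F and G -/

/-- The set `F_λ(T, σ; l, k)`. -/
def Fset (lam : NPartition n) (T : ℕ → ℕ → ℕ) (sg : ℕ → ℕ) (l k : ℕ) : Set ℕ :=
  if l = 1 then Set.Icc (keyTab lam sg 1 k) (south lam T 1 k - 1)
  else
    let U := leftRemnant lam T l k
    let q := maxRow T U (l - 1) (south lam T l k - 1)
    let P := (Finset.Icc 1 q).filter fun h => keyTab lam sg l k ≤ leftEndVal T U (l - 1) h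
    if hP : P.Nonempty then Set.Icc (T (l - 1) (P.min' hP)) (south lam T l k - 1)
    else (∅ : Set ℕ)

/-- The set `G_λ(T, σ; l, k)`. -/
def Gset (lam : NPartition n) (T : ℕ → ℕ → ℕ) (sg : ℕ → ℕ) (l k : ℕ) : Set ℕ :=
  if l = 1 then {keyTab lam sg 1 k}
  else
    let U := leftRemnant lam T l k
    let q := maxRow T U (l - 1) (south lam T l k - 1)
    let P := (Finset.Icc 1 q).filter fun h => leftEndVal T U (l - 1) h = keyTab lam sg l k
    if hP : P.Nonempty then
      Set.Icc (T (l - 1) (P.min' hP))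
        (min ((if P.max' hP + 1 ≤ U (l - 1) then T (l - 1) (P.max' hP + 1) else n + 1) - 1)
          (south lam T l k - 1))
    else (∅ : Set ℕ)

/-! ### Polynomials, divided differences, words -/

/-- Polynomials in the variables `X 1, …, X n` (indexed by `ℕ`) over `ℚ`. -/
abbrev Poly : Type := MvPolynomial ℕ ℚ

/-- The action of `s_i` on polynomials: interchange `x_i` and `x_{i+1}`. -/
def sOp (i : ℕ) (P : Poly) : Poly := rename (Equiv.swap i (i + 1)) P

/-- The divided difference operator
`ρ_i = (x_i - x_{i+1})⁻¹ ∘ (1 - s_i) ∘ x_i`, defined as the unique polynomial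
`Q` with `(x_i - x_{i+1}) Q = x_i P - s_i (x_i P)`. -/
def rhoOp (i : ℕ) (P : Poly) : Poly :=
  if h : ∃ Q : Poly, (X i - X (i + 1)) * Q = X i * P - sOp i (X i * P) then h.choose
  else 0

/-- The operator `ρ̄_i := ρ_i - 1`. -/
def rhoBarOp (i : ℕ) (P : Poly) : Poly := rhoOp i P - P

/-- Apply operators indexed by a word `[i_t, …, i_1]`, rightmost first:
`applyOps f [i_t, …, i_1] P = f i_t (⋯ (f i_1 P))`. -/
def applyOps (f : ℕ → Poly → Poly) : List ℕ → Poly → Poly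
  | [], P => P
  | i :: w, P => f i (applyOps f w P)

/-- The monomial `x_1^{λ_1} ⋯ x_n^{λ_n}`. -/
def lamMonomial (lam : NPartition n) : Poly :=
  ∏ i ∈ Finset.Icc 1 n, X i ^ lam.part i

/-- The weight monomial `x^T = ∏ x_i^{c_i}` of the filling `T`. -/
def weight (lam : NPartition n) (T : ℕ → ℕ → ℕ) : Poly :=
  ∏ b ∈ boxes lam, X (T b.1 b.2)

/-- The simple reflection `s_i` acting by value. -/
def swapVal (i v : ℕ) : ℕ := if v = i then i + 1 else if v = i + 1 then i else v

/-- The permutation `s_{i_t} ⋯ s_{i_1}.(1, 2, …, n)` obtained by applying the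
word `w = [i_t, …, i_1]` (rightmost letter first, each acting by value) to the
identity. -/
def permOfWord (w : List ℕ) : ℕ → ℕ := w.foldr (fun i f => swapVal i ∘ f) id

/-- `w` is a word in letters `s_1, …, s_{n-1}` producing `π` from `(1, …, n)`. -/
def WordFor (n : ℕ) (w : List ℕ) (p : ℕ → ℕ) : Prop :=
  (∀ i ∈ w, 1 ≤ i ∧ i + 1 ≤ n) ∧ ∀ t, 1 ≤ t → t ≤ n → permOfWord w t = p t

/-- `w` is a reduced word for `π`: it produces `π` with minimal length. -/
def IsReducedWord (n : ℕ) (w : List ℕ) (p : ℕ → ℕ) : Prop :=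
  WordFor n w p ∧ ∀ w' : List ℕ, WordFor n w' p → w.length ≤ w'.length

/-- The atom `c_λ(π;x) = ρ̄_{i_t} ⋯ ρ̄_{i_1} . x_1^{λ_1} ⋯ x_n^{λ_n}`, computed
from a choice of reduced word for `π` (it is independent of this choice). -/
def atomPoly (lam : NPartition n) (p : ℕ → ℕ) : Poly :=
  if h : ∃ w : List ℕ, IsReducedWord n w p then
    applyOps rhoBarOp h.choose (lamMonomial lam)
  else 0

/-! ### `S_n^λ` -/

/-- The set `Q_λ` of distinct column lengths of `λ`. -/
def Qset (lam : NPartition n) : Finset ℕ := (Finset.Icc 1 (lam.part 1)).image (zeta lam)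

/-- `π ∈ S_n^λ`: an `n`-permutation increasing on each block `[q_{r-1}+1, q_r]`
cut out by the column lengths of `λ` (equivalently, `π_i < π_j` whenever
`i < j` and no element of `Q_λ` lies in `[i, j)`). -/
def InSnLam (lam : NPartition n) (p : ℕ → ℕ) : Prop :=
  IsNPerm n p ∧ ∀ i j, 1 ≤ i → i < j → j ≤ n →
    (∀ q ∈ Qset lam, q < i ∨ j ≤ q) → p i < p j

end KeyPoly

namespace KeyPoly
/-! ### Path layer lemmas -/

section PathLemmas

variable {T : ℕ → ℕ → ℕ} {c : ℕ → ℕ} {maxCol : ℕ}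

lemma find?_range'_le {p : ℕ → Bool} {s n a b : ℕ} (hb : b ∈ List.range' s n)
    (hpb : p b = true) (ha : (List.range' s n).find? p = some a) : a ≤ b := by
  induction n generalizing s with
  | zero => simp at hb
  | succ n ih =>
    rw [List.range'_succ] at hb ha
    rcases List.mem_cons.1 hb with rfl | hb'
    · rw [List.find?_cons, hpb] at ha
      exact (Option.some.inj ha).ge
    · rw [List.find?_cons] at ha
      cases hps : p s with
      | true => rw [hps] at ha
                have hb2 := List.mem_range'_1.1 hb'
                have : s = a := Option.some.inj ha
                omega
      | false => rw [hps] at ha; exact ih hb' ha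

lemma nextCol_some {h h₂ : ℕ} (hh : nextCol T c maxCol h = some h₂) :
    h < h₂ ∧ h₂ ≤ maxCol ∧ 0 < c h₂ ∧ T h (c h) ≤ T h₂ (c h₂) := by
  unfold nextCol at hh
  have hm := List.find?_some hh
  have hmem := List.mem_of_find?_eq_some hh
  rw [List.mem_range'_1] at hmem
  simp only [decide_eq_true_eq] at hm
  exact ⟨by omega, by omega, hm.1, hm.2⟩

lemma nextCol_earliest {h h' : ℕ} (hlt : h < h') (hle : h' ≤ maxCol)
    (hc : 0 < c h') (hv : T h (c h) ≤ T h' (c h')) :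
    ∃ h₂, nextCol T c maxCol h = some h₂ ∧ h₂ ≤ h' := by
  have hmem : h' ∈ List.range' (h + 1) (maxCol - h) := by
    rw [List.mem_range'_1]; omega
  have hp : (fun x => decide (0 < c x ∧ T h (c h) ≤ T x (c x))) h' = true := by
    simp [hc, hv]
  cases hfind : nextCol T c maxCol h with
  | none =>
    exfalso
    unfold nextCol at hfind
    have := List.find?_eq_none.1 hfind h' hmem
    exact this hp
  | some h₂ =>
    refine ⟨h₂, rfl, ?_⟩
    exact find?_range'_le hmem hp hfind

lemma pathColsAux_head (fuel h : ℕ) :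
    ∃ t, pathColsAux T c maxCol fuel h = h :: t := by
  cases fuel with
  | zero => exact ⟨[], rfl⟩
  | succ f =>
    unfold pathColsAux
    cases nextCol T c maxCol h with
    | none => exact ⟨[], rfl⟩
    | some h' => exact ⟨_, rfl⟩

lemma self_mem_pathColsAux (fuel h : ℕ) : h ∈ pathColsAux T c maxCol fuel h := by
  obtain ⟨t, ht⟩ := pathColsAux_head (T := T) (c := c) (maxCol := maxCol) fuel h
  rw [ht]; exact List.mem_cons_self

lemma mem_pathColsAux {fuel g x : ℕ} (hx : x ∈ pathColsAux T c maxCol fuel g) :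
    x = g ∨ (g < x ∧ x ≤ maxCol ∧ 0 < c x) := by
  induction fuel generalizing g with
  | zero => simp [pathColsAux] at hx; exact Or.inl hx
  | succ f ih =>
    unfold pathColsAux at hx
    cases hnc : nextCol T c maxCol g with
    | none => rw [hnc] at hx; simp at hx; exact Or.inl hx
    | some h₂ =>
      rw [hnc] at hx
      rcases List.mem_cons.1 hx with rfl | hx'
      · exact Or.inl rfl
      · obtain ⟨h1, h2, h3, _⟩ := nextCol_some hnc
        rcases ih hx' with rfl | ⟨hh1, hh2, hh3⟩
        · exact Or.inr ⟨h1, h2, h3⟩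
        · exact Or.inr ⟨h1.trans hh1, hh2, hh3⟩

lemma headVal_le_memVal {fuel g x : ℕ} (hx : x ∈ pathColsAux T c maxCol fuel g) :
    T g (c g) ≤ T x (c x) := by
  induction fuel generalizing g with
  | zero => simp [pathColsAux] at hx; subst hx; exact le_refl _
  | succ f ih =>
    unfold pathColsAux at hx
    cases hnc : nextCol T c maxCol g with
    | none => rw [hnc] at hx; simp at hx; subst hx; exact le_refl _
    | some h₂ =>
      rw [hnc] at hx
      rcases List.mem_cons.1 hx with rfl | hx'
      · exact le_refl _
      · exact (nextCol_some hnc).2.2.2.trans (ih hx')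

lemma memVal_le_memVal {fuel g x y : ℕ} (hx : x ∈ pathColsAux T c maxCol fuel g)
    (hy : y ∈ pathColsAux T c maxCol fuel g) (hxy : x < y) :
    T x (c x) ≤ T y (c y) := by
  induction fuel generalizing g with
  | zero =>
    simp [pathColsAux] at hx hy; omega
  | succ f ih =>
    unfold pathColsAux at hx hy
    cases hnc : nextCol T c maxCol g with
    | none => rw [hnc] at hx hy; simp at hx hy; omega
    | some h₂ =>
      rw [hnc] at hx hy
      rcases List.mem_cons.1 hx with rfl | hx' <;> rcases List.mem_cons.1 hy with h | hy'
      · omega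
      · exact (nextCol_some hnc).2.2.2.trans (headVal_le_memVal hy')
      · subst h
        rcases mem_pathColsAux hx' with rfl | ⟨h1, _, _⟩
        · exact absurd (nextCol_some hnc).1 (by omega)
        · exact absurd ((nextCol_some hnc).1.trans h1) (by omega)
      · exact ih hx' hy'

lemma getLastD_mem_pathColsAux (fuel g : ℕ) :
    (pathColsAux T c maxCol fuel g).getLastD g ∈ pathColsAux T c maxCol fuel g := by
  obtain ⟨t, ht⟩ := pathColsAux_head (T := T) (c := c) (maxCol := maxCol) fuel g
  rw [ht, List.getLastD_cons]
  rcases List.mem_cons.1 (List.getLastD_mem_cons (l := t) (a := g)) with h | h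
  · rw [h]; exact List.mem_cons_self
  · exact List.mem_cons_of_mem _ h

lemma mem_le_getLastD {fuel g x : ℕ} (hx : x ∈ pathColsAux T c maxCol fuel g) :
    x ≤ (pathColsAux T c maxCol fuel g).getLastD g := by
  induction fuel generalizing g with
  | zero => simp [pathColsAux] at hx ⊢; omega
  | succ f ih =>
    unfold pathColsAux at hx ⊢
    cases hnc : nextCol T c maxCol g with
    | none => rw [hnc] at hx; simp at hx ⊢; omega
    | some h₂ =>
      rw [hnc] at hx
      rw [List.getLastD_cons]
      have hlast : (pathColsAux T c maxCol f h₂).getLastD g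
          = (pathColsAux T c maxCol f h₂).getLastD h₂ := by
        obtain ⟨t, ht⟩ := pathColsAux_head (T := T) (c := c) (maxCol := maxCol) f h₂
        rw [ht, List.getLastD_cons, List.getLastD_cons]
      rw [hlast]
      rcases List.mem_cons.1 hx with rfl | hx'
      · have h1 := (nextCol_some hnc).1
        have h2 := mem_le_getLastD_aux (f := f) (h₂ := h₂)
        omega
      · exact ih hx'
where
  mem_le_getLastD_aux {f h₂ : ℕ} : h₂ ≤ (pathColsAux T c maxCol f h₂).getLastD h₂ := by
    have hm := getLastD_mem_pathColsAux (T := T) (c := c) (maxCol := maxCol) f h₂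
    rcases mem_pathColsAux hm with h | ⟨h1, _, _⟩
    · omega
    · omega

lemma memVal_le_lastVal {fuel g x : ℕ} (hx : x ∈ pathColsAux T c maxCol fuel g) :
    T x (c x) ≤ T ((pathColsAux T c maxCol fuel g).getLastD g)
      (c ((pathColsAux T c maxCol fuel g).getLastD g)) := by
  have hlm := getLastD_mem_pathColsAux (T := T) (c := c) (maxCol := maxCol) fuel g
  rcases lt_or_eq_of_le (mem_le_getLastD hx) with h | h
  · exact memVal_le_memVal hx hlm h
  · rw [← h]

lemma lastVal_ge_candidate {fuel g h : ℕ} (hfuel : maxCol ≤ fuel + g) (hgh : g < h)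
    (hhm : h ≤ maxCol) (hch : 0 < c h) (hv : T g (c g) ≤ T h (c h)) :
    T h (c h) ≤ T ((pathColsAux T c maxCol fuel g).getLastD g)
      (c ((pathColsAux T c maxCol fuel g).getLastD g)) := by
  induction fuel generalizing g with
  | zero => omega
  | succ f ih =>
    obtain ⟨h₂, hnc, hh₂⟩ := nextCol_earliest hgh hhm hch hv
    unfold pathColsAux
    rw [hnc, List.getLastD_cons]
    obtain ⟨h1, h2, h3, h4⟩ := nextCol_some hnc
    have hlast : (pathColsAux T c maxCol f h₂).getLastD g
        = (pathColsAux T c maxCol f h₂).getLastD h₂ := by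
      obtain ⟨t, ht⟩ := pathColsAux_head (T := T) (c := c) (maxCol := maxCol) f h₂
      rw [ht, List.getLastD_cons, List.getLastD_cons]
    rw [hlast]
    rcases eq_or_lt_of_le hh₂ with rfl | hlt
    · exact memVal_le_lastVal (self_mem_pathColsAux f h₂)
    · rcases le_or_gt (T h₂ (c h₂)) (T h (c h)) with hle | hgt
      · exact ih (g := h₂) (by omega) hlt hle
      · exact le_trans hgt.le (memVal_le_lastVal (self_mem_pathColsAux f h₂))

lemma nextCol_mem_pathColsAux {fuel g x h₂ : ℕ} (hfuel : maxCol ≤ fuel + g)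
    (hx : x ∈ pathColsAux T c maxCol fuel g)
    (hnc : nextCol T c maxCol x = some h₂) : h₂ ∈ pathColsAux T c maxCol fuel g := by
  induction fuel generalizing g with
  | zero =>
    simp [pathColsAux] at hx; subst hx
    obtain ⟨h1, h2, _⟩ := nextCol_some hnc
    omega
  | succ f ih =>
    unfold pathColsAux at hx ⊢
    cases hnc0 : nextCol T c maxCol g with
    | none =>
      rw [hnc0] at hx; simp at hx; subst hx
      rw [hnc0] at hnc; exact absurd hnc (by simp)
    | some k₂ =>
      rw [hnc0] at hx
      rcases List.mem_cons.1 hx with rfl | hx'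
      · rw [hnc0] at hnc
        have : k₂ = h₂ := Option.some.inj hnc
        subst this
        exact List.mem_cons_of_mem _ (self_mem_pathColsAux f k₂)
      · have hk := (nextCol_some hnc0).1
        exact List.mem_cons_of_mem _ (ih (g := k₂) (by omega) hx')

lemma candidate_mem_pathColsAux {fuel g h x : ℕ} (hfuel : maxCol ≤ fuel + g)
    (hx : x ∈ pathColsAux T c maxCol fuel g)
    (hmax : ∀ y ∈ pathColsAux T c maxCol fuel g, y < h → y ≤ x)
    (hxh : x < h) (hhm : h ≤ maxCol) (hch : 0 < c h)
    (hv : T x (c x) ≤ T h (c h)) : h ∈ pathColsAux T c maxCol fuel g := by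
  obtain ⟨h₂, hnc, hh₂⟩ := nextCol_earliest hxh hhm hch hv
  have hmem := nextCol_mem_pathColsAux hfuel hx hnc
  have hgt := (nextCol_some hnc).1
  rcases eq_or_lt_of_le hh₂ with rfl | hlt
  · exact hmem
  · exact absurd (hmax h₂ hmem hlt) (by omega)

end PathLemmas

/-! ### Shape and tableau lemmas -/

section ShapeLemmas

variable {n : ℕ} {lam : NPartition n}

lemma zeta_le_n (lam : NPartition n) (h : ℕ) : zeta lam h ≤ n := by
  unfold zeta
  calc ((Finset.Icc 1 n).filter fun i => h ≤ lam.part i).card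
      ≤ (Finset.Icc 1 n).card := Finset.card_filter_le _ _
    _ = n := by rw [Nat.card_Icc]; omega

lemma le_zeta_iff {h k : ℕ} (hk : 1 ≤ k) :
    k ≤ zeta lam h ↔ (k ≤ n ∧ h ≤ lam.part k) := by
  constructor
  · intro hle
    by_contra hcon
    push_neg at hcon
    rcases le_or_gt k n with hkn | hkn
    · have hpk := hcon hkn
      have hsub : ((Finset.Icc 1 n).filter fun i => h ≤ lam.part i) ⊆ Finset.Icc 1 (k - 1) := by
        intro i hi
        rw [Finset.mem_filter, Finset.mem_Icc] at hi
        rw [Finset.mem_Icc]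
        refine ⟨hi.1.1, ?_⟩
        by_contra hik
        push_neg at hik
        have : lam.part i ≤ lam.part k := lam.antitone hk (by omega)
        omega
      have := Finset.card_le_card hsub
      rw [Nat.card_Icc] at this
      unfold zeta at hle
      omega
    · have := zeta_le_n lam h
      omega
  · rintro ⟨hkn, hpk⟩
    have hsub : Finset.Icc 1 k ⊆ (Finset.Icc 1 n).filter fun i => h ≤ lam.part i := by
      intro i hi
      rw [Finset.mem_Icc] at hi
      rw [Finset.mem_filter, Finset.mem_Icc]
      exact ⟨⟨hi.1, by omega⟩, le_trans hpk (lam.antitone hi.1 hi.2)⟩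
    have := Finset.card_le_card hsub
    rw [Nat.card_Icc] at this
    unfold zeta
    omega

lemma inShape_iff {j i : ℕ} :
    InShape lam j i ↔ 1 ≤ j ∧ 1 ≤ i ∧ i ≤ zeta lam j := by
  unfold InShape
  constructor
  · rintro ⟨h1, h2, h3, h4⟩
    exact ⟨h1, h2, (le_zeta_iff h2).2 ⟨h3, h4⟩⟩
  · rintro ⟨h1, h2, h3⟩
    have := (le_zeta_iff h2).1 h3
    exact ⟨h1, h2, this.1, this.2⟩

lemma zeta_antitone {g h : ℕ} (hgh : g ≤ h) : zeta lam h ≤ zeta lam g := by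
  apply Finset.card_le_card
  intro i hi
  rw [Finset.mem_filter] at hi ⊢
  exact ⟨hi.1, le_trans hgh hi.2⟩

lemma zeta_eq_zero_of_east {h : ℕ} (hh : lam.part 1 < h) : zeta lam h = 0 := by
  unfold zeta
  rw [Finset.card_eq_zero, Finset.filter_eq_empty_iff]
  intro i hi
  rw [Finset.mem_Icc] at hi
  have : lam.part i ≤ lam.part 1 := lam.antitone (le_refl 1) hi.1
  omega

lemma col_le_maxCol {h : ℕ} (hch : 0 < zeta lam h) : h ≤ lam.part 1 := by
  by_contra hc
  push_neg at hc
  rw [zeta_eq_zero_of_east hc] at hch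
  omega

variable {T : ℕ → ℕ → ℕ} (hT : IsSSYT lam T)

include hT

lemma shape_val_pos {l k : ℕ} (hs : InShape lam l k) : 1 ≤ T l k := (hT.1 l k hs).1

lemma shape_val_le_n {l k : ℕ} (hs : InShape lam l k) : T l k ≤ n := (hT.1 l k hs).2

lemma row_le_val {l k : ℕ} (hs : InShape lam l k) : k ≤ T l k := by
  induction k with
  | zero => omega
  | succ m ih =>
    rcases Nat.eq_zero_or_pos m with rfl | hm
    · exact (hT.1 l 1 hs).1
    · have hsm : InShape lam l m := by
        rw [inShape_iff] at hs ⊢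
        refine ⟨hs.1, by omega, ?_⟩
        have := hs.2.2
        have hmono : zeta lam l ≤ zeta lam l := le_refl _
        rw [le_zeta_iff (by omega)] at this ⊢
        exact ⟨by omega, le_trans this.2 (lam.antitone hm (by omega))⟩
      have := hT.2.2 l m hs
      have := ih hsm
      omega

lemma val_le_south_sub_one {l k : ℕ} (hs : InShape lam l k) :
    T l k ≤ south lam T l k - 1 := by
  unfold south
  split
  · have := hT.2.2 l k ‹_›
    omega
  · have := shape_val_le_n hT hs
    omega

lemma val_le_east {l k : ℕ} (hs : InShape lam l k) : T l k ≤ east lam T l k := by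
  unfold east
  split
  · exact hT.2.1 l k ‹_›
  · exact shape_val_le_n hT hs

end ShapeLemmas

/-! ### keyTab lemmas -/

section KeyLemmas

variable {n : ℕ} {lam : NPartition n} {p : ℕ → ℕ} (hp : IsNPerm n p)

include hp

lemma key_length (j : ℕ) :
    ((((Finset.Icc 1 (zeta lam j)).image p).sort (· ≤ ·))).length = zeta lam j := by
  rw [Finset.length_sort, Finset.card_image_of_injOn, Nat.card_Icc]
  · omega
  · apply Set.InjOn.mono _ hp.injOn
    rw [Finset.coe_Icc]
    exact Set.Icc_subset_Icc_right (by exact_mod_cast zeta_le_n lam j)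

lemma key_get {j i : ℕ} (hs : InShape lam j i) :
    ∃ hlt : i - 1 < ((((Finset.Icc 1 (zeta lam j)).image p).sort (· ≤ ·))).length,
      keyTab lam p j i = ((((Finset.Icc 1 (zeta lam j)).image p).sort (· ≤ ·))).get ⟨i - 1, hlt⟩ := by
  have hz := (inShape_iff.1 hs).2.2
  have h1 := (inShape_iff.1 hs).2.1
  have hlt : i - 1 < ((((Finset.Icc 1 (zeta lam j)).image p).sort (· ≤ ·))).length := by
    rw [key_length hp]; omega
  refine ⟨hlt, ?_⟩
  unfold keyTab
  rw [if_pos hs]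
  rw [List.getD_eq_getElem?_getD, List.getElem?_eq_getElem hlt]
  rfl

lemma key_pos {j i : ℕ} (hs : InShape lam j i) : 1 ≤ keyTab lam p j i ∧ keyTab lam p j i ≤ n := by
  obtain ⟨hlt, hk⟩ := key_get hp hs
  have hmem : keyTab lam p j i ∈ ((Finset.Icc 1 (zeta lam j)).image p).sort (· ≤ ·) := by
    rw [hk]; exact List.get_mem _ _
  rw [Finset.mem_sort, Finset.mem_image] at hmem
  obtain ⟨t, ht, hpt⟩ := hmem
  rw [Finset.mem_Icc] at ht
  have : p t ∈ Set.Icc 1 n := hp.mapsTo ⟨ht.1, le_trans ht.2 (zeta_le_n lam j)⟩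
  rw [← hpt]
  exact ⟨this.1, this.2⟩

lemma key_mono {j i i' : ℕ} (hii : i ≤ i') (hi : 1 ≤ i) (hs' : InShape lam j i') :
    keyTab lam p j i ≤ keyTab lam p j i' := by
  have hs : InShape lam j i := by
    rw [inShape_iff] at hs' ⊢
    exact ⟨hs'.1, hi, le_trans hii hs'.2.2⟩
  obtain ⟨hlt, hk⟩ := key_get hp hs
  obtain ⟨hlt', hk'⟩ := key_get hp hs'
  rw [hk, hk']
  exact (Finset.pairwise_sort _ (· ≤ ·)).rel_get_of_le (by simp [Fin.le_def]; omega)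

omit hp

lemma key_zero_of_not_shape {j i : ℕ} (hs : ¬ InShape lam j i) : keyTab lam p j i = 0 := by
  unfold keyTab; rw [if_neg hs]

lemma shape_of_key_pos {j i : ℕ} (hk : 1 ≤ keyTab lam p j i) : InShape lam j i := by
  by_contra hc
  rw [key_zero_of_not_shape hc] at hk
  omega

end KeyLemmas

/-! ### Removal layer -/

/-- Invariant for remnants obtained by removing `r` scanning paths starting
from column `j`. -/
structure RInv {n : ℕ} (lam : NPartition n) (j r : ℕ) (c : ℕ → ℕ) : Prop where
  le_zeta : ∀ h, c h ≤ zeta lam h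
  west : ∀ h, h < j → c h = zeta lam h
  mono : ∀ g h, j ≤ g → g ≤ h → c h ≤ c g
  start : c j = zeta lam j - r

section RemoveLemmas

variable {n : ℕ} {lam : NPartition n} {T : ℕ → ℕ → ℕ} {c : ℕ → ℕ}

lemma removePath_le (j h : ℕ) : removePath T c (lam.part 1) j h ≤ c h := by
  unfold removePath; split <;> omega

lemma removePath_ge (j h : ℕ) : c h - 1 ≤ removePath T c (lam.part 1) j h := by
  unfold removePath; split <;> omega

lemma removePath_of_mem {j h : ℕ} (hm : h ∈ pathCols T c (lam.part 1) j) :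
    removePath T c (lam.part 1) j h = c h - 1 := by
  unfold removePath; rw [if_pos hm]

lemma removePath_of_not_mem {j h : ℕ} (hm : h ∉ pathCols T c (lam.part 1) j) :
    removePath T c (lam.part 1) j h = c h := by
  unfold removePath; rw [if_neg hm]

lemma RInv_removePath (hT : IsSSYT lam T) {j r : ℕ} (hj : 1 ≤ j)
    (inv : RInv lam j r c) (hr : r < zeta lam j) :
    RInv lam j (r + 1) (removePath T c (lam.part 1) j) := by
  have hcj : 0 < c j := by rw [inv.start]; omega
  -- adjacent monotonicity of the new remnant
  have hadj : ∀ g, j ≤ g → removePath T c (lam.part 1) j (g + 1)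
      ≤ removePath T c (lam.part 1) j g := by
    intro g hg
    rcases le_or_gt (g + 1) (lam.part 1) with hgm | hgm
    · by_cases hg1 : g + 1 ∈ pathCols T c (lam.part 1) j
      · rw [removePath_of_mem hg1]
        have := inv.mono g (g+1) hg (by omega)
        have := removePath_ge (T := T) (lam := lam) (c := c) j g
        omega
      · by_cases hg0 : g ∈ pathCols T c (lam.part 1) j
        · rw [removePath_of_mem hg0, removePath_of_not_mem hg1]
          have hle := inv.mono g (g+1) hg (by omega)
          rcases lt_or_eq_of_le hle with hlt | heq
          · omega
          · -- c (g+1) = c g; show g+1 would have been on the path, contradiction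
            exfalso
            rcases Nat.eq_zero_or_pos (c g) with hz | hpos
            · -- then g itself cannot be on the path unless g = j, but c j > 0
              rcases mem_pathColsAux hg0 with rfl | ⟨_, _, hcg⟩
              · omega
              · omega
            · apply hg1
              have hshape : InShape lam (g + 1) (c (g + 1)) := by
                rw [inShape_iff]
                exact ⟨by omega, by omega, inv.le_zeta (g+1)⟩
              have hrow : T g (c g) ≤ T (g + 1) (c (g + 1)) := by
                have h5 := hT.2.1 g (c (g+1)) hshape
                rw [heq] at h5 ⊢
                exact h5
              exact candidate_mem_pathColsAux (by omega) hg0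
                (fun y _ hy => by omega) (by omega) hgm (by omega) hrow
        · rw [removePath_of_not_mem hg0, removePath_of_not_mem hg1]
          exact inv.mono g (g+1) hg (by omega)
    · have : zeta lam (g + 1) = 0 := zeta_eq_zero_of_east (by omega)
      have h1 := removePath_le (T := T) (lam := lam) (c := c) j (g+1)
      have h2 := inv.le_zeta (g+1)
      omega
  refine ⟨?_, ?_, ?_, ?_⟩
  · intro h
    exact le_trans (removePath_le j h) (inv.le_zeta h)
  · intro h hh
    have hnm : h ∉ pathCols T c (lam.part 1) j := by
      intro hm
      rcases mem_pathColsAux hm with rfl | ⟨h1, _, _⟩ <;> omega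
    rw [removePath_of_not_mem hnm]
    exact inv.west h hh
  · intro g h hg hgh
    induction h with
    | zero =>
      have : g = 0 := by omega
      subst this; exact le_refl _
    | succ m ih =>
      rcases Nat.lt_or_ge g (m + 1) with hlt | hge
      · exact le_trans (hadj m (by omega)) (ih (by omega))
      · have : g = m + 1 := by omega
        subst this; exact le_refl _
  · have : j ∈ pathCols T c (lam.part 1) j := self_mem_pathColsAux _ _
    rw [removePath_of_mem this, inv.start]
    omega

lemma RInv_remnantIter (hT : IsSSYT lam T) {j r : ℕ} (hj : 1 ≤ j)
    (hr : r ≤ zeta lam j) :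
    RInv lam j r (remnantIter T (zeta lam) (lam.part 1) j r) := by
  induction r with
  | zero =>
    exact ⟨fun h => le_refl _, fun h _ => rfl,
      fun g h _ hgh => zeta_antitone hgh, by simp [remnantIter]⟩
  | succ m ih =>
    exact RInv_removePath hT hj (ih (by omega)) (by omega)

lemma RInv_remnant (hT : IsSSYT lam T) {j i : ℕ} (hj : 1 ≤ j) (hiz : i ≤ zeta lam j) :
    RInv lam j (zeta lam j - i) (remnant lam T j i) :=
  RInv_remnantIter hT hj (by omega)

lemma remnant_start (hT : IsSSYT lam T) {j i : ℕ} (hj : 1 ≤ j) (hiz : i ≤ zeta lam j) :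
    remnant lam T j i j = i := by
  have := (RInv_remnant hT hj hiz).start
  rw [this]; omega

lemma remnantIter_anti {j r r' : ℕ} (hrr : r ≤ r') (h : ℕ) :
    remnantIter T (zeta lam) (lam.part 1) j r' h ≤ remnantIter T (zeta lam) (lam.part 1) j r h := by
  induction r' with
  | zero => have : r = 0 := by omega
            subst this; exact le_refl _
  | succ m ih =>
    rcases Nat.lt_or_ge r (m + 1) with hlt | hge
    · exact le_trans (removePath_le j h) (ih (by omega))
    · have : r = m + 1 := by omega
      subst this; exact le_refl _

lemma remnant_mono {j i i' : ℕ} (hii : i ≤ i') (h : ℕ) :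
    remnant lam T j i h ≤ remnant lam T j i' h :=
  remnantIter_anti (by omega) h

lemma remnant_step {j i : ℕ} (hi : 1 ≤ i) (hiz : i ≤ zeta lam j) :
    remnant lam T j (i - 1) = removePath T (remnant lam T j i) (lam.part 1) j := by
  unfold remnant
  have : zeta lam j - (i - 1) = (zeta lam j - i) + 1 := by omega
  rw [this]
  rfl

lemma remnant_step_mem {j i l : ℕ} (hi : 1 ≤ i) (hiz : i ≤ zeta lam j)
    (hl : l ∈ scanPath lam T j i) :
    remnant lam T j (i - 1) l = remnant lam T j i l - 1 := by
  rw [remnant_step hi hiz]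
  exact removePath_of_mem hl

lemma nat_ivt {f : ℕ → ℕ} {k N : ℕ} (h0 : k ≤ f 0) (hN : f N < k) :
    ∃ r, r < N ∧ k ≤ f r ∧ f (r + 1) < k := by
  induction N with
  | zero => omega
  | succ m ih =>
    rcases Nat.lt_or_ge (f m) k with hlt | hge
    · obtain ⟨r, h1, h2, h3⟩ := ih hlt
      exact ⟨r, by omega, h2, h3⟩
    · exact ⟨m, by omega, hge, hN⟩

/-- Every box of the shape is removed by exactly one scanning path from any
column weakly to its west. -/
lemma exists_scan_step (hT : IsSSYT lam T) {j l k : ℕ} (hj : 1 ≤ j) (hjl : j ≤ l)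
    (hs : InShape lam l k) :
    ∃ i, 1 ≤ i ∧ i ≤ zeta lam j ∧ l ∈ scanPath lam T j i ∧ remnant lam T j i l = k := by
  obtain ⟨_, hk1, hkz⟩ := inShape_iff.1 hs
  have hzj : 1 ≤ zeta lam j := by
    have := zeta_antitone (lam := lam) hjl
    omega
  have hfin : remnantIter T (zeta lam) (lam.part 1) j (zeta lam j) l = 0 := by
    have hinv := RInv_remnantIter hT hj (le_refl (zeta lam j))
    have h1 := hinv.mono j l (le_refl j) hjl
    have h2 := hinv.start
    omega
  obtain ⟨r, hr1, hr2, hr3⟩ := nat_ivt (f := fun r => remnantIter T (zeta lam) (lam.part 1) j r l)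
    (k := k) (N := zeta lam j) (by simp only [remnantIter]; omega) (by show remnantIter T (zeta lam) (lam.part 1) j (zeta lam j) l < k; rw [hfin]; omega)
  set cr := remnantIter T (zeta lam) (lam.part 1) j r with hcr
  have hstep : remnantIter T (zeta lam) (lam.part 1) j (r + 1)
      = removePath T cr (lam.part 1) j := rfl
  have hmem : l ∈ pathCols T cr (lam.part 1) j := by
    by_contra hc
    rw [hstep] at hr3
    rw [removePath_of_not_mem hc] at hr3
    omega
  have heq : cr l = k := by
    rw [hstep] at hr3
    rw [removePath_of_mem hmem] at hr3
    omega
  refine ⟨zeta lam j - r, by omega, by omega, ?_, ?_⟩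
  · unfold scanPath remnant
    have : zeta lam j - (zeta lam j - r) = r := by omega
    rw [this]
    exact hmem
  · unfold remnant
    have : zeta lam j - (zeta lam j - r) = r := by omega
    rw [this]
    exact heq

end RemoveLemmas

/-! ### mEast, scanValue, Aset -/

section ScanLemmas

variable {n : ℕ} {lam : NPartition n} {T : ℕ → ℕ → ℕ}

lemma mEast_le_iff {c : ℕ → ℕ} {maxCol l y : ℕ} :
    mEast T c maxCol l ≤ y ↔
      (1 ≤ y ∧ ∀ h, l < h → h ≤ maxCol → 0 < c h → T h (c h) ≤ y) := by
  unfold mEast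
  rw [max_le_iff, Finset.sup_le_iff]
  constructor
  · rintro ⟨h1, h2⟩
    exact ⟨h1, fun h hlh hhm hch => h2 h (by rw [Finset.mem_filter, Finset.mem_Icc]; exact ⟨⟨hlh, hhm⟩, hch⟩)⟩
  · rintro ⟨h1, h2⟩
    refine ⟨h1, fun b hb => ?_⟩
    rw [Finset.mem_filter, Finset.mem_Icc] at hb
    exact h2 b hb.1.1 hb.1.2 hb.2

lemma scanValue_le_iff (hT : IsSSYT lam T) {l k y : ℕ} (hs : InShape lam l k) :
    scanValue lam T l k ≤ y ↔
      (T l k ≤ y ∧ mEast T (remnant lam T l k) (lam.part 1) l ≤ y) := by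
  obtain ⟨hl1, hk1, hkz⟩ := inShape_iff.1 hs
  set c := remnant lam T l k with hc
  have hinv : RInv lam l (zeta lam l - k) c := RInv_remnant hT hl1 hkz
  have hcl : c l = k := remnant_start hT hl1 hkz
  have hTlk : 1 ≤ T l k := shape_val_pos hT hs
  have hsv : scanValue lam T l k
      = T ((pathCols T c (lam.part 1) l).getLastD l) (c ((pathCols T c (lam.part 1) l).getLastD l)) := rfl
  constructor
  · intro hle
    rw [hsv] at hle
    have hstart : T l (c l) ≤ y :=
      le_trans (memVal_le_lastVal (self_mem_pathColsAux _ _)) hle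
    rw [hcl] at hstart
    refine ⟨hstart, mEast_le_iff.2 ⟨by omega, fun h hlh hhm hch => ?_⟩⟩
    rcases le_or_gt (T h (c h)) (T l (c l)) with hv | hv
    · rw [hcl] at hv; omega
    · have := lastVal_ge_candidate (fuel := lam.part 1) (g := l)
        (by omega) hlh hhm hch hv.le
      exact le_trans this hle
  · rintro ⟨h1, h2⟩
    rw [hsv]
    have hlm := getLastD_mem_pathColsAux (T := T) (c := c) (maxCol := lam.part 1) (lam.part 1) l
    rcases mem_pathColsAux hlm with heq | ⟨hlt, hle, hpos⟩
    · show T ((pathColsAux T c (lam.part 1) (lam.part 1) l).getLastD l)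
        (c ((pathColsAux T c (lam.part 1) (lam.part 1) l).getLastD l)) ≤ y
      rw [heq, hcl]; exact h1
    · exact (mEast_le_iff.1 h2).2 _ hlt hle hpos

lemma mem_Aset_iff (hT : IsSSYT lam T) {p : ℕ → ℕ} {l k : ℕ} (hs : InShape lam l k) :
    T l k ∈ Aset lam T p l k ↔
      (T l k ≤ keyTab lam p l k ∧ mEast T (remnant lam T l k) (lam.part 1) l ≤ keyTab lam p l k) := by
  unfold Aset
  split
  · rename_i hlt
    simp only [Set.mem_empty_iff_false, false_iff]
    rintro ⟨_, h2⟩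
    omega
  · rename_i hge
    push_neg at hge
    rw [Set.mem_Icc]
    have h1 := row_le_val hT hs
    have h2 := val_le_south_sub_one hT hs
    have h3 := val_le_east hT hs
    constructor
    · rintro ⟨_, hmin⟩
      rw [le_min_iff, le_min_iff] at hmin
      exact ⟨hmin.1, hge⟩
    · rintro ⟨hkey, _⟩
      exact ⟨h1, by rw [le_min_iff, le_min_iff]; exact ⟨hkey, h2, h3⟩⟩

end ScanLemmas

/-! ### B-set lemmas -/

section BsetLemmas

lemma le_foldr_max {L : List ℕ} {x : ℕ} (hx : x ∈ L) : x ≤ L.foldr max 0 := by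
  induction L with
  | nil => simp at hx
  | cons a t ih =>
    rcases List.mem_cons.1 hx with rfl | hx'
    · exact le_max_left _ _
    · exact le_trans (ih hx') (le_max_right _ _)

lemma foldr_max_mem {L : List ℕ} (h : 0 < L.foldr max 0) : L.foldr max 0 ∈ L := by
  induction L with
  | nil => simp at h
  | cons a t ih =>
    simp only [List.foldr_cons] at h ⊢
    rcases le_or_gt (t.foldr max 0) a with hle | hlt
    · rw [max_eq_left hle]; exact List.mem_cons_self
    · rw [max_eq_right hlt.le] at h ⊢
      exact List.mem_cons_of_mem _ (ih (by omega))

variable {n : ℕ} {lam : NPartition n} {T : ℕ → ℕ → ℕ} {p : ℕ → ℕ}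

lemma mem_Bset_of_scan (hp : IsNPerm n p) (hT : IsSSYT lam T)
    (H : ∀ j i, InShape lam j i → scanValue lam T j i ≤ keyTab lam p j i)
    {l k : ℕ} (hs : InShape lam l k) : T l k ∈ Bset lam T p l k := by
  obtain ⟨hl1, hk1, hkz⟩ := inShape_iff.1 hs
  intro j hj1 hjl
  rcases eq_or_lt_of_le hjl with heq | hjl'
  · -- j = l
    subst heq
    refine ⟨k, ?_, ?_, ?_, ?_⟩
    · unfold aIdx; rw [if_pos rfl]
    · unfold bIdx; rw [if_pos rfl]
    · unfold Epath; rw [if_pos rfl]; exact row_le_val hT hs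
    · exact ((scanValue_le_iff hT hs).1 (H _ k hs)).1
  · -- j < l
    have hjne : j ≠ l := by omega
    obtain ⟨i, hi1, hiz, hmem, hrem⟩ := exists_scan_step hT hj1 (by omega) hs
    have hshapei : InShape lam j i := inShape_iff.2 ⟨hj1, hi1, hiz⟩
    refine ⟨i, ?_, ?_, ?_, ?_⟩
    · -- aIdx ≤ i
      unfold aIdx; rw [if_neg hjne]
      apply Finset.sup_le
      intro a ha
      rw [Finset.mem_filter, Finset.mem_Icc] at ha
      obtain ⟨⟨ha1, haz⟩, hamem, hak⟩ := ha
      show a ≤ i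
      by_contra hc
      push_neg at hc
      have hstep : remnant lam T j (a - 1) (l - 1) = remnant lam T j a (l - 1) - 1 :=
        remnant_step_mem ha1 haz hamem
      have hmono1 : remnant lam T j i (l - 1) ≤ remnant lam T j (a - 1) (l - 1) :=
        remnant_mono (by omega) _
      have hinv := RInv_remnant hT hj1 hiz
      have hmono2 : remnant lam T j i l ≤ remnant lam T j i (l - 1) :=
        hinv.mono (l - 1) l (by omega) (by omega)
      omega
    · -- i + 1 ≤ bIdx
      unfold bIdx; rw [if_neg hjne]
      by_cases hkz' : k = zeta lam l
      · rw [if_pos hkz']; omega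
      · rw [if_neg hkz']
        have hs' : InShape lam l (k + 1) := inShape_iff.2 ⟨hl1, by omega, by omega⟩
        obtain ⟨b, hb1, hbz, hbmem, hbrem⟩ := exists_scan_step hT hj1 (by omega) hs'
        have hbgt : i < b := by
          by_contra hc
          push_neg at hc
          have := remnant_mono (T := T) (lam := lam) (j := j) hc l
          omega
        have hbf : b ∈ (Finset.Icc 1 (zeta lam j)).filter
            fun i' => InScanPath lam T j i' l (k + 1) := by
          rw [Finset.mem_filter, Finset.mem_Icc]
          exact ⟨⟨hb1, hbz⟩, hbmem, hbrem.symm⟩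
        have := Finset.le_sup (f := id) hbf
        simp only [id] at this
        omega
    · -- Epath ≤ T l k
      unfold Epath; rw [if_neg hjne]
      set L := (scanPath lam T j i).filter fun h => decide (h < l) with hL
      have hjL : j ∈ L := by
        rw [hL, List.mem_filter]
        exact ⟨self_mem_pathColsAux _ _, by simp; omega⟩
      have hMpos : 0 < L.foldr max 0 := lt_of_lt_of_le (by omega) (le_foldr_max hjL)
      have hMmem := foldr_max_mem hMpos
      rw [List.mem_filter] at hMmem
      obtain ⟨hMpath, hMlt⟩ := hMmem
      simp only [decide_eq_true_eq] at hMlt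
      have := memVal_le_memVal hMpath hmem hMlt
      rw [hrem] at this
      exact this
    · -- T l k ≤ keyTab j i
      have h1 : T l (remnant lam T j i l) ≤ scanValue lam T j i :=
        memVal_le_lastVal hmem
      rw [hrem] at h1
      exact le_trans h1 (H j i hshapei)

lemma scan_of_mem_Bset (hp : IsNPerm n p) (hT : IsSSYT lam T)
    (H : ∀ l k, InShape lam l k → T l k ∈ Bset lam T p l k) :
    ∀ l k, InShape lam l k → scanValue lam T l k ≤ keyTab lam p l k := by
  intro l k hs
  obtain ⟨hl1, hk1, hkz⟩ := inShape_iff.1 hs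
  rw [scanValue_le_iff hT hs]
  have hself : T l k ≤ keyTab lam p l k := by
    obtain ⟨i, hia, hib, _, hikey⟩ := H l k hs l hl1 (le_refl l)
    unfold aIdx at hia
    unfold bIdx at hib
    rw [if_pos rfl] at hia
    rw [if_pos rfl] at hib
    have : i = k := by omega
    subst this
    exact hikey
  refine ⟨hself, mEast_le_iff.2 ⟨(key_pos hp hs).1, ?_⟩⟩
  intro h hlh hhm hch
  set m := remnant lam T l k h with hm
  have hinvk := RInv_remnant hT hl1 hkz
  have hsh : InShape lam h m := inShape_iff.2 ⟨by omega, by omega, hinvk.le_zeta h⟩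
  have hv1 : 1 ≤ T h m := shape_val_pos hT hsh
  obtain ⟨i, hia, hib, hiE, hikey⟩ := H h m hsh l hl1 (by omega)
  have hlne : l ≠ h := by omega
  have hkli : 1 ≤ keyTab lam p l i := by omega
  have hshli : InShape lam l i := shape_of_key_pos hkli
  obtain ⟨_, hi1, hiz⟩ := inShape_iff.1 hshli
  rcases le_or_gt i k with hik | hik
  · exact le_trans hikey (key_mono hp hik hi1 hs)
  · exfalso
    -- remnant l i h = m
    have hup : m ≤ remnant lam T l i h := hm ▸ remnant_mono hik.le h
    have hreq : remnant lam T l i h = m := by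
      by_cases hmz : m = zeta lam h
      · have := (RInv_remnant hT hl1 hiz).le_zeta h
        omega
      · unfold bIdx at hib
        rw [if_neg hlne, if_neg hmz] at hib
        have hex : ∃ i₀ ∈ (Finset.Icc 1 (zeta lam l)).filter
            (fun i' => InScanPath lam T l i' h (m + 1)), i < i₀ := by
          by_contra hc
          push_neg at hc
          have : ((Finset.Icc 1 (zeta lam l)).filter
              (fun i' => InScanPath lam T l i' h (m + 1))).sup id ≤ i :=
            Finset.sup_le fun x hx => hc x hx
          omega
        obtain ⟨i₀, hi₀f, hi₀gt⟩ := hex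
        rw [Finset.mem_filter, Finset.mem_Icc] at hi₀f
        obtain ⟨⟨hi₀1, hi₀z⟩, hi₀mem, hi₀rem⟩ := hi₀f
        have hstep : remnant lam T l (i₀ - 1) h = remnant lam T l i₀ h - 1 :=
          remnant_step_mem hi₀1 hi₀z hi₀mem
        have := remnant_mono (T := T) (lam := lam) (j := l) (show i ≤ i₀ - 1 by omega) h
        omega
    -- h is on the scanning path P(T; l, i)
    unfold Epath at hiE
    rw [if_neg hlne] at hiE
    set L := (scanPath lam T l i).filter fun x => decide (x < h) with hL
    have hlL : l ∈ L := by
      rw [hL, List.mem_filter]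
      exact ⟨self_mem_pathColsAux _ _, by simp; omega⟩
    have hMpos : 0 < L.foldr max 0 := lt_of_lt_of_le (by omega) (le_foldr_max hlL)
    have hMmem := foldr_max_mem hMpos
    rw [List.mem_filter] at hMmem
    obtain ⟨hMpath, hMlt⟩ := hMmem
    simp only [decide_eq_true_eq] at hMlt
    have hhmax : h ≤ lam.part 1 := by
      have h1 : h ≤ lam.part m := hsh.2.2.2
      have h2 : lam.part m ≤ lam.part 1 := lam.antitone (le_refl 1) (by omega)
      omega
    have hhpath : h ∈ scanPath lam T l i := by
      apply candidate_mem_pathColsAux (fuel := lam.part 1) (g := l) (by omega) hMpath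
        (fun y hy hyh => le_foldr_max (by rw [hL, List.mem_filter]; exact ⟨hy, by simp; omega⟩))
        hMlt hhmax (by omega)
      rw [hreq]
      exact hiE
    have hstep2 : remnant lam T l (i - 1) h = remnant lam T l i h - 1 :=
      remnant_step_mem hi1 hiz hhpath
    have := remnant_mono (T := T) (lam := lam) (j := l) (show k ≤ i - 1 by omega) h
    omega

end BsetLemmas

/-- Theorem 10.1.  The conditions (i) `S(T) ≤ Y_λ(π)`,
(ii) all entries lie in the `A`-sets, and (iii) all entries lie in the
`B`-sets, are equivalent. -/
theorem Aset_iff_Bset (n : ℕ) (hn : 1 ≤ n) (lam : NPartition n)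
    (p : ℕ → ℕ) (hp : IsNPerm n p) (T : ℕ → ℕ → ℕ) (hT : IsSSYT lam T) :
    ((∀ j i, InShape lam j i → scanValue lam T j i ≤ keyTab lam p j i) ↔
      (∀ l k, InShape lam l k → T l k ∈ Aset lam T p l k)) ∧
    ((∀ j i, InShape lam j i → scanValue lam T j i ≤ keyTab lam p j i) ↔
      (∀ l k, InShape lam l k → T l k ∈ Bset lam T p l k)) := by
  constructor
  · constructor
    · intro H l k hs
      rw [mem_Aset_iff hT hs, ← scanValue_le_iff hT hs]
      exact H l k hs
    · intro H l k hs
      rw [scanValue_le_iff hT hs, ← mem_Aset_iff hT hs]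
      exact H l k hs
  · constructor
    · intro H l k hs
      exact mem_Bset_of_scan hp hT H hs
    · intro H
      exact scan_of_mem_Bset hp hT H

end KeyPoly
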